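/- Let s = 2N+1 be odd (N ≥ 1), 0 < ρ < 1, and ν the self-similar measure with equal weights for the IFS {τ_d(x)=(-1)^d ρ(x+d)}_{d=0}^{2N}. Then Z(ν̂) ⊆ ( ⋃_{k=1}^∞ ((2ℤ+1)\s(2ℤ+1))/(2ρ^k s) ) ∪ ( ⋃_{k=1}^∞ (ℤ\sℤ)/(ρ^k s) ). -/

import Mathlib

open MeasureTheory Complex Filter Finset
open scoped ENNReal Real



noncomputable def eFT (u : ℝ) : ℂ := Complex.exp (((2 * Real.pi * u : ℝ) : ℂ) * Complex.I)

lemma eFT_arg (t x : ℝ) :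
    Complex.exp (2 * (Real.pi : ℂ) * Complex.I * (t : ℂ) * (x : ℂ)) = eFT (t * x) := by
  unfold eFT; push_cast; ring_nf

lemma eFT_abs (u : ℝ) : ‖eFT u‖ = 1 := Complex.norm_exp_ofReal_mul_I _

lemma eFT_add (u v : ℝ) : eFT (u + v) = eFT u * eFT v := by
  unfold eFT; rw [← Complex.exp_add]; push_cast; ring_nf

lemma eFT_nat_mul (n : ℕ) (u : ℝ) : eFT (n * u) = eFT u ^ n := by
  unfold eFT; rw [← Complex.exp_nat_mul]; push_cast; ring_nf

lemma eFT_neg (u : ℝ) : eFT (-u) = (starRingEnd ℂ) (eFT u) := by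
  unfold eFT
  rw [← Complex.exp_conj]
  congr 1
  rw [map_mul, Complex.conj_I, Complex.conj_ofReal]
  push_cast
  ring

lemma eFT_int (m : ℤ) : eFT m = 1 := by
  unfold eFT
  rw [show ((2 * Real.pi * (m:ℝ) : ℝ) : ℂ) * Complex.I = (m:ℂ) * (2 * Real.pi * Complex.I) by push_cast; ring]
  exact Complex.exp_int_mul_two_pi_mul_I m

lemma eFT_cont : Continuous eFT := by
  unfold eFT
  fun_prop

lemma eFT_zero : eFT 0 = 1 := by simp [eFT]

lemma abs_eFT_sub_one_sq (u : ℝ) :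
    ‖eFT u - 1‖ ^ 2 = 2 - 2 * Real.cos (2 * Real.pi * u) := by
  unfold eFT
  rw [Complex.exp_mul_I, Complex.sq_norm, ← Complex.ofReal_cos, ← Complex.ofReal_sin]
  set a := Real.cos (2 * Real.pi * u) with ha
  set b := Real.sin (2 * Real.pi * u) with hb
  have h : b ^ 2 + a ^ 2 = 1 := Real.sin_sq_add_cos_sq _
  simp only [Complex.normSq_apply, Complex.add_re, Complex.sub_re, Complex.ofReal_re,
    Complex.mul_re, Complex.I_re, Complex.I_im, Complex.ofReal_im, Complex.one_re,
    Complex.add_im, Complex.sub_im, Complex.mul_im, Complex.one_im]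
  nlinarith [h]




noncomputable def phiFT (ν : Measure ℝ) (t : ℝ) : ℂ := ∫ x, eFT (t * x) ∂ν

lemma integrable_eFT (μ : Measure ℝ) [IsFiniteMeasure μ] (t : ℝ) :
    Integrable (fun x => eFT (t * x)) μ := by
  have hc : Continuous (fun x : ℝ => eFT (t * x)) := eFT_cont.comp (by fun_prop)
  refine (integrable_const (1 : ℝ)).mono' hc.aestronglyMeasurable ?_
  filter_upwards with x
  simp [eFT_abs]

lemma phiFT_neg (ν : Measure ℝ) [IsFiniteMeasure ν] (t : ℝ) :
    phiFT ν (-t) = (starRingEnd ℂ) (phiFT ν t) := by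
  unfold phiFT
  rw [← integral_conj]
  congr 1 with x
  rw [← eFT_neg]
  ring_nf

lemma phiFT_zero (ν : Measure ℝ) [IsProbabilityMeasure ν] : phiFT ν 0 = 1 := by
  unfold phiFT
  simp [eFT_zero]

lemma phiFT_tendsto (ν : Measure ℝ) [IsProbabilityMeasure ν] (ρ t : ℝ) (h0 : 0 < ρ) (h1 : ρ < 1) :
    Tendsto (fun n : ℕ => phiFT ν (ρ ^ n * t)) atTop (nhds 1) := by
  have hlim : Tendsto (fun n : ℕ => (ρ : ℝ) ^ n) atTop (nhds 0) :=
    tendsto_pow_atTop_nhds_zero_of_lt_one h0.le h1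
  have key : Tendsto (fun n : ℕ => phiFT ν (ρ ^ n * t)) atTop (nhds (∫ _ : ℝ, (1 : ℂ) ∂ν)) := by
    apply tendsto_integral_of_dominated_convergence (bound := fun _ => (1 : ℝ))
    · intro n
      exact (eFT_cont.comp (by fun_prop)).aestronglyMeasurable
    · exact integrable_const 1
    · intro n
      filter_upwards with x
      simp [eFT_abs]
    · filter_upwards with x
      have hc : Continuous fun r : ℝ => eFT (r * t * x) := eFT_cont.comp (by fun_prop)
      have := (hc.tendsto 0).comp hlim
      simpa [Function.comp_def, eFT_zero, mul_assoc] using this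
  simpa using key




lemma phiFT_selfsimilar (N : ℕ) (ρ : ℝ) (ν : Measure ℝ) [IsProbabilityMeasure ν]
    (hself : ν = (2 * N + 1 : ℝ≥0∞)⁻¹ • ∑ d ∈ Finset.range (2 * N + 1),
      Measure.map (fun x : ℝ => (-1 : ℝ) ^ d * ρ * (x + (d : ℝ))) ν) (t : ℝ) :
    phiFT ν t = ((2 * N + 1 : ℝ)⁻¹ : ℂ) * ∑ d ∈ Finset.range (2 * N + 1),
      eFT (t * ((-1) ^ d * ρ * d)) * phiFT ν ((-1 : ℝ) ^ d * ρ * t) := by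
  have hmeas : ∀ d : ℕ, Measurable (fun x : ℝ => (-1 : ℝ) ^ d * ρ * (x + (d : ℝ))) := by
    intro d; fun_prop
  have hprob : ∀ d : ℕ,
      IsProbabilityMeasure (Measure.map (fun x : ℝ => (-1 : ℝ) ^ d * ρ * (x + (d : ℝ))) ν) :=
    fun d => Measure.isProbabilityMeasure_map (hmeas d).aemeasurable
  have h1 : phiFT ν t = ∫ x, eFT (t * x)
      ∂((2 * N + 1 : ℝ≥0∞)⁻¹ • ∑ d ∈ Finset.range (2 * N + 1),
        Measure.map (fun x : ℝ => (-1 : ℝ) ^ d * ρ * (x + (d : ℝ))) ν) :=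
    congrArg (fun μ => ∫ x, eFT (t * x) ∂μ) hself
  rw [h1, integral_smul_measure, integral_finset_sum_measure (fun d _ => by
    have := hprob d
    exact integrable_eFT _ t)]
  have htr : ((2 * N + 1 : ℝ≥0∞)⁻¹).toReal = (2 * N + 1 : ℝ)⁻¹ := by
    rw [ENNReal.toReal_inv]
    have h2 : (2 * (N : ℝ≥0∞) + 1) = ((2 * N + 1 : ℕ) : ℝ≥0∞) := by push_cast; ring
    rw [h2, ENNReal.toReal_natCast]
    push_cast
    ring
  rw [htr]
  have hterm : ∀ d ∈ Finset.range (2 * N + 1),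
      (∫ x, eFT (t * x) ∂(Measure.map (fun x : ℝ => (-1 : ℝ) ^ d * ρ * (x + (d : ℝ))) ν))
        = eFT (t * ((-1) ^ d * ρ * d)) * phiFT ν ((-1 : ℝ) ^ d * ρ * t) := by
    intro d _
    have hc : Continuous fun x : ℝ => eFT (t * x) :=
      eFT_cont.comp (continuous_const.mul continuous_id)
    rw [integral_map (hmeas d).aemeasurable hc.aestronglyMeasurable]
    have : ∀ x : ℝ, eFT (t * ((-1 : ℝ) ^ d * ρ * (x + (d : ℝ))))
        = eFT (t * ((-1) ^ d * ρ * d)) * eFT (((-1 : ℝ) ^ d * ρ * t) * x) := by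
      intro x
      rw [← eFT_add]
      ring_nf
    simp_rw [this]
    rw [MeasureTheory.integral_const_mul]
    rfl
  rw [Finset.sum_congr rfl hterm]
  rw [Complex.real_smul, Complex.ofReal_inv]



lemma sum_range_odd_pair {M : Type*} [AddCommMonoid M] (f : ℕ → M) (n : ℕ) :
    ∑ d ∈ Finset.range (2 * n + 1), f d
      = f 0 + ∑ j ∈ Finset.range n, (f (2 * j + 1) + f (2 * j + 2)) := by
  induction n with
  | zero => simp
  | succ n ih =>
      rw [show 2 * (n + 1) + 1 = (2 * n + 1) + 1 + 1 by ring]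
      rw [Finset.sum_range_succ, Finset.sum_range_succ, ih, Finset.sum_range_succ]
      have e1 : 2 * n + 1 + 1 = 2 * n + 2 := by ring
      rw [e1]
      abel

lemma key_step (N : ℕ) (hN : 1 ≤ N) (ρ t : ℝ)
    (ν : Measure ℝ) [IsProbabilityMeasure ν]
    (hself : ν = (2 * N + 1 : ℝ≥0∞)⁻¹ • ∑ d ∈ Finset.range (2 * N + 1),
      Measure.map (fun x : ℝ => (-1 : ℝ) ^ d * ρ * (x + (d : ℝ))) ν)
    (h0 : phiFT ν t = 0) (h1 : phiFT ν (ρ * t) ≠ 0) :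
    ∃ a : ℤ, ¬ ((2 * N + 1 : ℤ) ∣ a) ∧ ρ * t = (a : ℝ) / (2 * (2 * (N : ℝ) + 1)) := by
  set u : ℝ := ρ * t with hu
  set c : ℂ := phiFT ν u with hc
  set ζ : ℂ := eFT u with hz
  -- the sum vanishes
  have hfe := phiFT_selfsimilar N ρ ν hself t
  rw [h0] at hfe
  have hne : ((2 * N + 1 : ℝ)⁻¹ : ℂ) ≠ 0 := by
    simp only [ne_eq, Complex.ofReal_eq_zero, inv_eq_zero]
    positivity
  have hsum : ∑ d ∈ Finset.range (2 * N + 1),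
      eFT (t * ((-1) ^ d * ρ * d)) * phiFT ν ((-1 : ℝ) ^ d * ρ * t) = 0 := by
    rcases mul_eq_zero.mp hfe.symm with h | h
    · exact absurd h hne
    · exact h
  -- rewrite each term
  have hterm : ∀ d : ℕ, eFT (t * ((-1) ^ d * ρ * d)) * phiFT ν ((-1 : ℝ) ^ d * ρ * t)
      = if Even d then ζ ^ d * c else (starRingEnd ℂ) (ζ ^ d * c) := by
    intro d
    rcases Nat.even_or_odd d with hd | hd
    · rw [if_pos hd, hd.neg_one_pow]
      have e1 : t * (1 * ρ * (d : ℝ)) = (d : ℝ) * u := by rw [hu]; ring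
      have e2 : (1 : ℝ) * ρ * t = u := by rw [hu]; ring
      rw [e1, e2, eFT_nat_mul, hz, hc]
    · rw [if_neg (Nat.not_even_iff_odd.mpr hd), hd.neg_one_pow]
      have e1 : t * (-1 * ρ * (d : ℝ)) = -((d : ℝ) * u) := by rw [hu]; ring
      have e2 : (-1 : ℝ) * ρ * t = -u := by rw [hu]; ring
      rw [e1, e2, eFT_neg, phiFT_neg, ← map_mul, eFT_nat_mul, hz, hc]
  -- geometric sums
  set P : ℂ := ∑ j ∈ Finset.range (N + 1), (ζ ^ 2) ^ j with hP
  set Q : ℂ := ∑ j ∈ Finset.range N, (ζ ^ 2) ^ j with hQ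
  have hsplit : c * P + (starRingEnd ℂ) (c * (ζ * Q)) = 0 := by
    rw [← hsum, Finset.sum_congr rfl (fun d _ => hterm d), sum_range_odd_pair]
    have h0' : (if Even 0 then ζ ^ 0 * c else (starRingEnd ℂ) (ζ ^ 0 * c)) = c := by
      simp
    have hODD : ∀ j : ℕ, (if Even (2 * j + 1) then ζ ^ (2 * j + 1) * c
        else (starRingEnd ℂ) (ζ ^ (2 * j + 1) * c)) = (starRingEnd ℂ) (c * ζ * (ζ ^ 2) ^ j) := by
      intro j
      rw [if_neg (by simp [Nat.even_add_one, parity_simps])]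
      congr 1
      rw [pow_succ, pow_mul]
      ring
    have hEVEN : ∀ j : ℕ, (if Even (2 * j + 2) then ζ ^ (2 * j + 2) * c
        else (starRingEnd ℂ) (ζ ^ (2 * j + 2) * c)) = c * ((ζ ^ 2) ^ (j + 1)) := by
      intro j
      rw [if_pos (by simp [parity_simps])]
      rw [show 2 * j + 2 = 2 * (j + 1) by ring, pow_mul]
      ring
    rw [Finset.sum_congr rfl (fun j _ => by rw [hODD j, hEVEN j])]
    rw [Finset.sum_add_distrib]
    have hPs : P = (∑ j ∈ Finset.range N, (ζ ^ 2) ^ (j + 1)) + 1 := by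
      rw [hP, Finset.sum_range_succ']
      simp
    rw [h0', hPs, ← map_sum, ← Finset.mul_sum, ← Finset.mul_sum, ← hQ,
      show c * (ζ * Q) = c * ζ * Q from (mul_assoc c ζ Q).symm]
    ring
  -- moduli are equal
  have hcabs : ‖c‖ ≠ 0 := by
    simpa [hc, map_eq_zero] using h1
  have habsPQ : ‖P‖ = ‖Q‖ := by
    have h2 : c * P = -(starRingEnd ℂ) (c * (ζ * Q)) := by linear_combination hsplit
    have := congrArg (‖·‖) h2
    rw [norm_mul, norm_neg, Complex.norm_conj, norm_mul, norm_mul, hz, eFT_abs, one_mul] at this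
    exact mul_left_cancel₀ hcabs this
  -- ζ² ≠ 1
  have hz2 : ζ ^ 2 ≠ 1 := by
    intro h
    rw [hP, hQ] at habsPQ
    simp only [h, one_pow, Finset.sum_const, Finset.card_range, nsmul_eq_mul, mul_one] at habsPQ
    rw [Complex.norm_natCast, Complex.norm_natCast] at habsPQ
    push_cast at habsPQ
    linarith
  -- equality for powers
  have hpow : ‖(ζ ^ 2) ^ (N + 1) - 1‖ = ‖(ζ ^ 2) ^ N - 1‖ := by
    have g1 : P * (ζ ^ 2 - 1) = (ζ ^ 2) ^ (N + 1) - 1 := geom_sum_mul (ζ ^ 2) (N + 1)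
    have g2 : Q * (ζ ^ 2 - 1) = (ζ ^ 2) ^ N - 1 := geom_sum_mul (ζ ^ 2) N
    rw [← g1, ← g2, norm_mul, norm_mul, habsPQ]
  -- pass to cosines
  have hzz : ∀ m : ℕ, (ζ ^ 2) ^ m = eFT ((2 * m : ℕ) * u) := by
    intro m
    rw [eFT_nat_mul, hz, ← pow_mul, mul_comm 2 m, pow_mul]
  have hcos : Real.cos (2 * Real.pi * ((2 * (N + 1) : ℕ) * u))
      = Real.cos (2 * Real.pi * ((2 * N : ℕ) * u)) := by
    have h1' := abs_eFT_sub_one_sq ((2 * (N + 1) : ℕ) * u)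
    have h2' := abs_eFT_sub_one_sq ((2 * N : ℕ) * u)
    rw [← hzz] at h1' h2'
    rw [hpow] at h1'
    linarith [h1', h2']
  obtain ⟨k, hk⟩ := Real.cos_eq_cos_iff.mp hcos
  have hπ : (Real.pi : ℝ) ≠ 0 := Real.pi_ne_zero
  -- helper to derive contradiction from 2u ∈ ℤ
  have h2uZ : ∀ m : ℤ, 2 * u = (m : ℝ) → False := by
    intro m hm
    apply hz2
    have : ζ ^ 2 = eFT ((2 : ℕ) * u) := by
      rw [eFT_nat_mul, hz]
    rw [this, show ((2 : ℕ) : ℝ) * u = ((m : ℤ) : ℝ) by push_cast; linarith [hm], eFT_int]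
  rcases hk with hk | hk
  · -- y = 2kπ + x : forces 2u ∈ ℤ
    exfalso
    apply h2uZ (-k)
    have hcancel : Real.pi * (2 * ((2 * N : ℕ) * u)) = Real.pi * (2 * k + 2 * ((2 * (N + 1) : ℕ) * u)) := by
      push_cast at hk ⊢
      linear_combination hk
    have := mul_left_cancel₀ hπ hcancel
    push_cast at this ⊢
    linarith
  · -- y = 2kπ - x : u = k / (2(2N+1))
    have hcancel : Real.pi * (2 * ((2 * N : ℕ) * u)) = Real.pi * (2 * k - 2 * ((2 * (N + 1) : ℕ) * u)) := by
      push_cast at hk ⊢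
      linear_combination hk
    have hlin := mul_left_cancel₀ hπ hcancel
    push_cast at hlin
    -- hlin : 2 * (2N * u) = 2k - 2*((2N+2) * u)  →  (8N+4) u = 2k
    refine ⟨k, ?_, ?_⟩
    · rintro ⟨m, hm⟩
      apply h2uZ m
      have hk' : (k : ℝ) = (2 * (N : ℝ) + 1) * m := by
        rw [hm]; push_cast; ring
      rw [hk'] at hlin
      have key2 : (4 * (N : ℝ) + 2) * (2 * u) = (4 * (N : ℝ) + 2) * m := by
        linear_combination hlin
      exact mul_left_cancel₀ (by positivity) key2
    · have hNpos : (0 : ℝ) < 2 * (2 * (N : ℝ) + 1) := by positivity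
      rw [eq_div_iff hNpos.ne']
      rw [hu] at hlin ⊢
      linear_combination hlin / 2



/-- for odd `s = 2N+1` (`N ≥ 1`), `0 < ρ < 1`, and the self-similar measure
`ν` of the IFS `{τ_d(x)=(-1)^d ρ(x+d)}_{d=0}^{2N}` with equal weights, the zero set of `ν̂`
is contained in
`(⋃_{k≥1} ((2ℤ+1)∖s(2ℤ+1))/(2ρ^k s)) ∪ (⋃_{k≥1} (ℤ∖sℤ)/(ρ^k s))`. -/
theorem ft_zero_set_subset (N : ℕ) (hN : 1 ≤ N) (ρ : ℝ) (hρ : ρ ∈ Set.Ioo (0 : ℝ) 1)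
    (ν : Measure ℝ) [IsProbabilityMeasure ν]
    (hself : ν = (2 * N + 1 : ℝ≥0∞)⁻¹ • ∑ d ∈ Finset.range (2 * N + 1),
      Measure.map (fun x : ℝ => (-1 : ℝ) ^ d * ρ * (x + (d : ℝ))) ν) :
    ∀ t : ℝ, (∫ x, Complex.exp (2 * (Real.pi : ℂ) * Complex.I * (t : ℂ) * (x : ℂ)) ∂ν) = 0 →
      (∃ k : ℕ, 1 ≤ k ∧ ∃ a : ℤ, Odd a ∧ (¬ ∃ b : ℤ, Odd b ∧ a = (2 * N + 1 : ℤ) * b) ∧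
        t = (a : ℝ) / (2 * ρ ^ k * (2 * N + 1))) ∨
      (∃ k : ℕ, 1 ≤ k ∧ ∃ a : ℤ, ¬ ((2 * N + 1 : ℤ) ∣ a) ∧
        t = (a : ℝ) / (ρ ^ k * (2 * N + 1))) := by
  obtain ⟨hρ0, hρ1⟩ := hρ
  intro t ht
  have ht' : phiFT ν t = 0 := by
    unfold phiFT
    simp_rw [← eFT_arg]
    exact ht
  have hex : ∃ n : ℕ, phiFT ν (ρ ^ n * t) ≠ 0 := by
    by_contra hcon
    push_neg at hcon
    have h2 := phiFT_tendsto ν ρ t hρ0 hρ1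
    rw [show (fun n : ℕ => phiFT ν (ρ ^ n * t)) = fun _ => (0 : ℂ) from funext hcon] at h2
    exact one_ne_zero (tendsto_nhds_unique h2 tendsto_const_nhds)
  set n := Nat.find hex with hn
  have hnspec : phiFT ν (ρ ^ n * t) ≠ 0 := Nat.find_spec hex
  have hn1 : 1 ≤ n := by
    by_contra h
    have h0 : n = 0 := by omega
    rw [h0, pow_zero, one_mul] at hnspec
    exact hnspec ht'
  have hprev : phiFT ν (ρ ^ (n - 1) * t) = 0 := by
    by_contra h
    exact Nat.find_min hex (show n - 1 < n by omega) h
  have hsub : n - 1 + 1 = n := Nat.sub_add_cancel hn1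
  have harg : ρ * (ρ ^ (n - 1) * t) = ρ ^ n * t := by
    calc ρ * (ρ ^ (n - 1) * t) = ρ ^ (n - 1 + 1) * t := by ring
    _ = ρ ^ n * t := by rw [hsub]
  obtain ⟨a, hnd, heq⟩ := key_step N hN ρ (ρ ^ (n - 1) * t) ν hself hprev
    (by rw [harg]; exact hnspec)
  rw [harg] at heq
  have hρn : (0 : ℝ) < ρ ^ n := pow_pos hρ0 n
  have hs : (0 : ℝ) < 2 * (N : ℝ) + 1 := by positivity
  have h2 : ρ ^ n * t * (2 * (2 * (N : ℝ) + 1)) = (a : ℝ) :=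
    ((div_eq_iff (by positivity)).mp heq.symm).symm
  rcases Int.even_or_odd a with ⟨b, hb⟩ | hodd
  · right
    refine ⟨n, hn1, b, ?_, ?_⟩
    · rintro ⟨m, hm⟩
      exact hnd ⟨2 * m, by rw [hb, hm]; ring⟩
    · have ha : (a : ℝ) = 2 * (b : ℝ) := by rw [hb]; push_cast; ring
      rw [eq_div_iff (by positivity : (ρ ^ n * (2 * (N : ℝ) + 1)) ≠ 0)]
      linear_combination h2 / 2 + ha / 2
  · left
    refine ⟨n, hn1, a, hodd, ?_, ?_⟩
    · rintro ⟨b, _, hab⟩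
      exact hnd ⟨b, hab⟩
    · rw [eq_div_iff (by positivity : (2 * ρ ^ n * (2 * (N : ℝ) + 1)) ≠ 0)]
      linear_combination h2
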